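/- Let f : ℤ_{≥0}^d → ℂ be a function and c ∈ ℂ such that f(n₁+1, …, n_d+1) = c·f(n₁, …, n_d) for all (n₁,…,n_d) ∈ ℤ_{≥0}^d. Let B = {n ∈ ℤ_{≥0}^d : min_i n_i = 0}. If the power series Σ_{n∈B} f(n) t₁^{n₁}⋯t_d^{n_d} is the expansion of a rational function, then the full generating series Σ_{n∈ℤ_{≥0}^d} f(n) t₁^{n₁}⋯t_d^{n_d} is also the expansion of a rational function. -/

import Mathlib

open MvPowerSeries Classical

/-- A multivariate formal power series is the expansion of a rational function. -/
def IsRationalPS {d : ℕ} (F : MvPowerSeries (Fin d) ℂ) : Prop :=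
  ∃ P Q : MvPolynomial (Fin d) ℂ, MvPolynomial.coeff 0 Q ≠ 0 ∧
    (Q : MvPowerSeries (Fin d) ℂ) * F = (P : MvPowerSeries (Fin d) ℂ)

/-- if `f (n + 1) = c · f n` (shift by the all-ones vector) and the generating
series over the boundary `B = {n : min_i n_i = 0}` is rational, then the full generating
series of `f` is rational. -/
theorem rational_of_homogeneity {d : ℕ} (f : (Fin d → ℕ) → ℂ) (c : ℂ)
    (hhom : ∀ n : Fin d → ℕ, f (fun i => n i + 1) = c * f n)
    (G S : MvPowerSeries (Fin d) ℂ)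
    (hG : ∀ e : Fin d →₀ ℕ, MvPowerSeries.coeff e G = f e)
    (hS : ∀ e : Fin d →₀ ℕ,
      MvPowerSeries.coeff e S = if ∃ i, e i = 0 then f e else 0)
    (hSrat : IsRationalPS S) :
    IsRationalPS G := by
  classical
  set ones : Fin d →₀ ℕ := Finsupp.equivFunOnFinite.symm 1 with hones
  have hones_apply : ∀ i, ones i = 1 := fun i => rfl
  have key : ((1 : MvPowerSeries (Fin d) ℂ) - MvPowerSeries.monomial ones c) * G = S := by
    ext e
    rw [sub_mul, one_mul, map_sub, MvPowerSeries.coeff_monomial_mul, hG, hS]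
    by_cases h : ones ≤ e
    · rw [if_pos h]
      have he : ∀ i, 1 ≤ e i := fun i => by simpa [hones_apply] using h i
      have hno : ¬ ∃ i, e i = 0 := by
        rintro ⟨i, hi⟩
        have := he i; omega
      rw [if_neg hno, hG]
      have hfe : f ⇑e = c * f ⇑(e - ones) := by
        rw [← hhom (⇑(e - ones))]
        congr 1
        funext i
        have h1 : (e - ones) i = e i - 1 := by
          simp [Finsupp.tsub_apply, hones_apply]
        have := he i
        omega
      rw [hfe]; ring
    · rw [if_neg h, sub_zero, if_pos]
      by_contra hc
      push_neg at hc
      exact h fun i => by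
        have := hc i
        simp only [hones_apply]
        omega
  rcases Nat.eq_zero_or_pos d with hd | hd
  · subst hd
    refine ⟨MvPolynomial.C (MvPowerSeries.coeff 0 G), 1, by simp, ?_⟩
    rw [MvPolynomial.coe_one, one_mul]
    ext e
    have he : e = 0 := Subsingleton.elim _ _
    subst he
    simp [MvPolynomial.coeff_coe]
  · obtain ⟨P, Q, hQ0, hQS⟩ := hSrat
    refine ⟨P, Q * (1 - MvPolynomial.monomial ones c), ?_, ?_⟩
    · have hones_ne : ones ≠ 0 := fun hh => by
        have := hones_apply ⟨0, hd⟩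
        rw [hh] at this
        simp at this
      have : MvPolynomial.coeff 0 (Q * (1 - MvPolynomial.monomial ones c))
          = MvPolynomial.coeff 0 Q * MvPolynomial.coeff 0 (1 - MvPolynomial.monomial ones c) := by
        simp only [← MvPolynomial.constantCoeff_eq, map_mul]
      rw [this]
      have : MvPolynomial.coeff 0 (1 - MvPolynomial.monomial ones c) = 1 := by
        rw [MvPolynomial.coeff_sub, MvPolynomial.coeff_one, MvPolynomial.coeff_monomial,
          if_neg hones_ne]
        simp
      rw [this, mul_one]
      exact hQ0
    · have hM : ((1 - MvPolynomial.monomial ones c : MvPolynomial (Fin d) ℂ) :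
          MvPowerSeries (Fin d) ℂ) = 1 - MvPowerSeries.monomial ones c := by
        ext e
        simp [MvPolynomial.coeff_coe, MvPolynomial.coeff_sub, MvPolynomial.coeff_one,
          MvPolynomial.coeff_monomial, MvPowerSeries.coeff_one, MvPowerSeries.coeff_monomial,
          eq_comm]
      rw [MvPolynomial.coe_mul, hM, mul_assoc, key, hQS]
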